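/- Let X,d be a standard quasi-metric space, x ∈ X a d-finite point, r ∈ ℝ≥0 and ε > 0. Then the set {(y,s) : d(x,y) - r + s < ε} is Scott-open in the poset of formal balls B(X,d). -/

import Mathlib

open scoped ENNReal NNReal Classical

/-- A formal ball: a point together with a non-negative real radius. -/
structure FormalBall (X : Type*) where
  center : X
  radius : ℝ≥0

/-- A quasi-metric on `X`: a `[0,∞]`-valued distance with `d x x = 0`, the triangle
inequality, and `d x y = d y x = 0 → x = y`. -/
structure QuasiMetric (X : Type*) where
  d : X → X → ℝ≥0∞
  refl : ∀ x, d x x = 0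
  triangle : ∀ x y z, d x z ≤ d x y + d y z
  separated : ∀ x y, d x y = 0 → d y x = 0 → x = y

/-- The order on formal balls: `(x,r) ≤ (y,s)` iff `d x y ≤ r - s`
(equivalently `s ≤ r` and `d x y ≤ r - s`). -/
def ballLE {X : Type*} (q : QuasiMetric X) (b c : FormalBall X) : Prop :=
  c.radius ≤ b.radius ∧ q.d b.center c.center ≤ ↑(b.radius - c.radius)

/-- The partial order of formal balls `B(X,d)`. -/
def ballOrder {X : Type*} (q : QuasiMetric X) : PartialOrder (FormalBall X) where
  le := ballLE q
  le_refl b := ⟨le_rfl, by simp [ballLE, q.refl]⟩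
  le_trans a b c hab hbc := ⟨hbc.1.trans hab.1, by
    calc q.d a.center c.center ≤ q.d a.center b.center + q.d b.center c.center :=
          q.triangle _ _ _
      _ ≤ ↑(a.radius - b.radius) + ↑(b.radius - c.radius) := add_le_add hab.2 hbc.2
      _ = ↑(a.radius - c.radius) := by
          rw [← ENNReal.coe_add, tsub_add_tsub_cancel hab.1 hbc.1]⟩
  le_antisymm a b hab hba := by
    have hr : b.radius = a.radius := le_antisymm hab.1 hba.1
    have h1 : q.d a.center b.center = 0 := le_antisymm (by simpa [hr] using hab.2) bot_le
    have h2 : q.d b.center a.center = 0 := le_antisymm (by simpa [hr] using hba.2) bot_le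
    have hc := q.separated _ _ h1 h2
    cases a; cases b; simp_all

/-- Standardness: a directed family of formal balls has a supremum iff the family with all
radii uniformly shifted by `s` has one. -/
def Standard {X : Type*} (q : QuasiMetric X) : Prop :=
  letI := ballOrder q
  ∀ S : Set (FormalBall X), S.Nonempty → DirectedOn (· ≤ ·) S → ∀ s : ℝ≥0,
    ((∃ b, IsLUB S b) ↔
      ∃ b, IsLUB ((fun c : FormalBall X => FormalBall.mk c.center (c.radius + s)) '' S) b)

/-- Scott-open: upward closed and inaccessible by suprema of nonempty directed sets. -/
def ScottOpen {α : Type*} [Preorder α] (U : Set α) : Prop :=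
  (∀ a ∈ U, ∀ b, a ≤ b → b ∈ U) ∧
  ∀ S : Set α, S.Nonempty → DirectedOn (· ≤ ·) S → ∀ a, IsLUB S a → a ∈ U → (S ∩ U).Nonempty

/-- in a standard quasi-metric space, if `x` is `d`-finite, then for all
`r ∈ ℝ≥0` and `ε > 0` the `d⁺`-open ball `{(y,s) : d(x,y) - r + s < ε}` (equivalently
`{(y,s) : d(x,y) + s < r + ε}`) is Scott-open in `B(X,d)`. -/
theorem ball_scottOpen_of_dFinite {X : Type*} (q : QuasiMetric X) (hstd : Standard q)
    (x : X)
    (hfin : ∀ S : Set (FormalBall X), S.Nonempty →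
      (letI := ballOrder q; DirectedOn (· ≤ ·) S) →
      ∀ y : X, (letI := ballOrder q; IsLUB S ⟨y, 0⟩) →
        q.d x y = ⨅ b ∈ S, (q.d x b.center + (b.radius : ℝ≥0∞)))
    (r ε : ℝ≥0) (hε : 0 < ε) :
    letI := ballOrder q
    ScottOpen {b : FormalBall X |
      q.d x b.center + (b.radius : ℝ≥0∞) < (r : ℝ≥0∞) + (ε : ℝ≥0∞)} := by
  letI := ballOrder q
  constructor
  · rintro a ha b ⟨hr, hd⟩
    simp only [Set.mem_setOf_eq] at ha ⊢
    calc q.d x b.center + (b.radius : ℝ≥0∞)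
        ≤ (q.d x a.center + q.d a.center b.center) + b.radius :=
          add_le_add_left (q.triangle _ _ _) _
      _ ≤ (q.d x a.center + ↑(a.radius - b.radius)) + b.radius :=
          add_le_add_left (add_le_add_right hd _) _
      _ = q.d x a.center + a.radius := by
          rw [add_assoc, ← ENNReal.coe_add, tsub_add_cancel_of_le hr]
      _ < r + ε := ha
  · rintro S hS hdir ⟨y, s⟩ hlub ha
    simp only [Set.mem_setOf_eq] at ha
    have hub : ∀ c ∈ S, c ≤ (⟨y, s⟩ : FormalBall X) := fun c hc => hlub.1 hc
    set T := (fun c : FormalBall X => FormalBall.mk c.center (c.radius - s)) '' S with hT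
    have hTne : T.Nonempty := hS.image _
    have hTdir : DirectedOn (· ≤ ·) T := by
      rintro _ ⟨c, hc, rfl⟩ _ ⟨c', hc', rfl⟩
      obtain ⟨e, he, hce, hc'e⟩ := hdir c hc c' hc'
      have hse : s ≤ e.radius := (hub e he).1
      refine ⟨⟨e.center, e.radius - s⟩, ⟨e, he, rfl⟩, ?_, ?_⟩
      · exact ⟨tsub_le_tsub_right hce.1 s, by
          rw [tsub_tsub_tsub_cancel_right hse]; exact hce.2⟩
      · exact ⟨tsub_le_tsub_right hc'e.1 s, by
          rw [tsub_tsub_tsub_cancel_right hse]; exact hc'e.2⟩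
    have himg : (fun c : FormalBall X => FormalBall.mk c.center (c.radius + s)) '' T = S := by
      ext b
      constructor
      · rintro ⟨_, ⟨c, hc, rfl⟩, rfl⟩
        have : c.radius - s + s = c.radius := tsub_add_cancel_of_le (hub c hc).1
        simpa only [this] using hc
      · intro hb
        refine ⟨⟨b.center, b.radius - s⟩, ⟨b, hb, rfl⟩, ?_⟩
        have : b.radius - s + s = b.radius := tsub_add_cancel_of_le (hub b hb).1
        simp only [this]
    obtain ⟨b, hb⟩ := (hstd T hTne hTdir s).mpr ⟨⟨y, s⟩, by rwa [himg]⟩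
    -- `⟨y,0⟩` is an upper bound of `T`
    have hy0 : (⟨y, 0⟩ : FormalBall X) ∈ upperBounds T := by
      rintro _ ⟨c, hc, rfl⟩
      exact ⟨zero_le, by simpa using (hub c hc).2⟩
    have hble : b ≤ (⟨y, 0⟩ : FormalBall X) := hb.2 hy0
    -- `⟨b.center, b.radius + s⟩` is an upper bound of `S`
    have hbs : (⟨b.center, b.radius + s⟩ : FormalBall X) ∈ upperBounds S := by
      intro c hc
      have h1 : (⟨c.center, c.radius - s⟩ : FormalBall X) ≤ b := hb.1 ⟨c, hc, rfl⟩
      refine ⟨?_, ?_⟩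
      · calc b.radius + s ≤ (c.radius - s) + s := add_le_add_left h1.1 s
          _ = c.radius := tsub_add_cancel_of_le (hub c hc).1
      · have := h1.2
        rwa [tsub_tsub, add_comm s b.radius] at this
    have hys : (⟨y, s⟩ : FormalBall X) ≤ ⟨b.center, b.radius + s⟩ := hlub.2 hbs
    have hbr : b.radius = 0 := by
      have h0 : b.radius + s ≤ 0 + s := by rw [zero_add]; exact hys.1
      exact le_antisymm (le_of_add_le_add_right h0) zero_le
    have hbc : b.center = y := by
      have h1 : q.d b.center y = 0 := by
        have := hble.2
        simp only [hbr, tsub_zero] at this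
        simpa using this
      have h2 : q.d y b.center = 0 := by
        have := hys.2
        have hz : s - (b.radius + s) = 0 := by simp [hbr]
        rw [hz] at this
        simpa using this
      exact q.separated _ _ h1 h2
    have hlubT : IsLUB T (⟨y, 0⟩ : FormalBall X) := by
      have : b = (⟨y, 0⟩ : FormalBall X) := by
        obtain ⟨bc, br⟩ := b
        simp only at hbr hbc
        rw [hbr, hbc]
      rwa [this] at hb
    have hkey := hfin T hTne hTdir y hlubT
    -- extract an element of `S` inside the open ball
    have hlt : q.d x y < ((r : ℝ≥0∞) + ε) - s := by
      rw [lt_tsub_iff_right]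
      exact ha
    rw [hkey] at hlt
    simp only [iInf_lt_iff] at hlt
    obtain ⟨b', hb', hlt⟩ := hlt
    obtain ⟨c, hc, rfl⟩ := hb'
    refine ⟨c, hc, ?_⟩
    simp only [Set.mem_setOf_eq]
    have : q.d x c.center + ↑(c.radius - s) + s < (r : ℝ≥0∞) + ε := by
      rw [← lt_tsub_iff_right]; exact hlt
    calc q.d x c.center + (c.radius : ℝ≥0∞)
        = q.d x c.center + ↑(c.radius - s) + s := by
          rw [add_assoc, ← ENNReal.coe_add, tsub_add_cancel_of_le (hub c hc).1]
      _ < r + ε := this
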